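/- Let n be a positive integer and f, g monic polynomials in ℤ[x]. If for every prime p dividing n we have gcd(f, g) = 1 in 𝔽_p[x], then the ideal generated by f and g in (ℤ/nℤ)[x] is the unit ideal, i.e., there exist a(x), b(x) ∈ ℤ[x] with f·a + g·b ≡ 1 (mod n). -/
import Mathlib


open Polynomial Finset

theorem stmt_8 (n : ℕ) (hn : 0 < n) (f g : ℤ[X]) (hf : f.Monic) (hg : g.Monic)
    (hcop : ∀ (p : ℕ) (_ : Fact p.Prime), p ∣ n →
      IsCoprime (f.map (Int.castRingHom (ZMod p))) (g.map (Int.castRingHom (ZMod p)))) :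
    ∃ a b : ℤ[X], (f * a + g * b).map (Int.castRingHom (ZMod n)) = 1 := by
  set Q : ℕ → Prop := fun m => ∃ a b : ℤ[X], (C (m : ℤ)) ∣ f * a + g * b - 1 with hQ
  -- prime case
  have hprime : ∀ p : ℕ, p.Prime → p ∣ n → Q p := by
    intro p hp hpn
    haveI : Fact p.Prime := ⟨hp⟩
    obtain ⟨u, v, huv⟩ := hcop p ⟨hp⟩ hpn
    obtain ⟨a, ha⟩ := Polynomial.map_surjective (Int.castRingHom (ZMod p))
      ZMod.intCast_surjective u
    obtain ⟨b, hb⟩ := Polynomial.map_surjective (Int.castRingHom (ZMod p))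
      ZMod.intCast_surjective v
    refine ⟨a, b, ?_⟩
    rw [Polynomial.C_dvd_iff_dvd_coeff]
    intro i
    have h0 : ((f * a + g * b - 1).map (Int.castRingHom (ZMod p))) = 0 := by
      rw [Polynomial.map_sub, Polynomial.map_add, Polynomial.map_mul, Polynomial.map_mul,
        ha, hb, Polynomial.map_one]
      linear_combination huv
    have h2 := congrArg (fun q => Polynomial.coeff q i) h0
    simp only [Polynomial.coeff_map, Polynomial.coeff_zero, Int.coe_castRingHom] at h2
    exact (ZMod.intCast_zmod_eq_zero_iff_dvd _ p).mp h2
  -- powers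
  have hpow : ∀ m k : ℕ, Q m → Q (m ^ k) := by
    rintro m k ⟨a, b, h, hh⟩
    set x : ℤ[X] := -(C (m : ℤ) * h) with hx
    set S : ℤ[X] := ∑ i ∈ Finset.range k, x ^ i with hS
    refine ⟨a * S, b * S, ?_⟩
    have key : f * (a * S) + g * (b * S) - 1 = -(x ^ k) := by
      have hg := geom_sum_mul x k
      linear_combination S * hh - hg
    rw [key]
    have : C ((m : ℤ)) ∣ x := ⟨-h, by ring⟩
    have : C ((m : ℤ)) ^ k ∣ x ^ k := pow_dvd_pow_of_dvd this k
    rw [← Polynomial.C_pow] at this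
    push_cast
    exact this.neg_right
  -- coprime combination
  have hmul : ∀ m m' : ℕ, Nat.Coprime m m' → Q m → Q m' → Q (m * m') := by
    rintro m m' hco ⟨a, b, h, hh⟩ ⟨a', b', h', hh'⟩
    obtain ⟨s, t, hst⟩ := hco.isCoprime
    have hstC : (C s * C (m : ℤ) + C t * C (m' : ℤ) : ℤ[X]) = 1 := by
      rw [← Polynomial.C_mul, ← Polynomial.C_mul, ← Polynomial.C_add, hst, Polynomial.C_1]
    refine ⟨C t * C (m' : ℤ) * a + C s * C (m : ℤ) * a',
      C t * C (m' : ℤ) * b + C s * C (m : ℤ) * b',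
      C t * h + C s * h', ?_⟩
    push_cast
    rw [Polynomial.C_mul]
    linear_combination (C t * C (m' : ℤ)) * hh + (C s * C (m : ℤ)) * hh' + hstC
  -- induction over prime factors
  have main : ∀ s : Finset ℕ, s ⊆ n.primeFactors →
      Q (∏ p ∈ s, p ^ n.factorization p) := by
    intro s
    induction s using Finset.induction_on with
    | empty => intro _; exact ⟨0, 0, by simp⟩
    | @insert p s hps ih =>
      intro hsub
      rw [Finset.prod_insert hps]
      have hp : p.Prime := Nat.prime_of_mem_primeFactors (hsub (Finset.mem_insert_self p s))
      have hco : Nat.Coprime (p ^ n.factorization p) (∏ q ∈ s, q ^ n.factorization q) := by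
        apply Nat.Coprime.pow_left
        apply Nat.Coprime.prod_right
        intro q hq
        have hq' : q.Prime := Nat.prime_of_mem_primeFactors
          (hsub (Finset.mem_insert_of_mem hq))
        apply Nat.Coprime.pow_right
        exact (Nat.coprime_primes hp hq').mpr (fun h => hps (h ▸ hq))
      exact hmul _ _ hco
        (hpow p _ (hprime p hp (Nat.dvd_of_mem_primeFactors (hsub (Finset.mem_insert_self p s)))))
        (ih (fun q hq => hsub (Finset.mem_insert_of_mem hq)))
  have hQn : Q n := by
    have := main n.primeFactors (le_refl _)
    rwa [← Nat.support_factorization, ← Finsupp.prod,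
      Nat.factorization_prod_pow_eq_self hn.ne'] at this
  obtain ⟨a, b, h, hh⟩ := hQn
  refine ⟨a, b, ?_⟩
  have h0 : ((f * a + g * b - 1).map (Int.castRingHom (ZMod n))) = 0 := by
    rw [hh, Polynomial.map_mul, Polynomial.map_C]
    simp
  rw [Polynomial.map_sub, Polynomial.map_one, sub_eq_zero] at h0
  exact h0
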